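/- Suppose α_q ≥ 0 for all q = 1,…,l, and suppose the equation x = φ_α(x) has a unique solution x ∈ (0,1). Then the constant vector x·1ₙ is the unique solution in [0,1]^n of the vector fixed-point equation X = (1ₙ + tanh(∇f(X)))/2. -/

import Mathlib

open MeasureTheory ProbabilityTheory Real Set

noncomputable section

/-- The real-valued vertex configuration associated to a boolean configuration. -/
def boolToR (n : ℕ) (X : Fin n → Bool) : Fin n → ℝ := fun i => if X i then 1 else 0

/-- The 1-norm on ℝⁿ. -/
def norm1 (n : ℕ) (x : Fin n → ℝ) : ℝ := ∑ i, |x i|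

/-- `C_j^m(X)`: the sum over (m-1)-tuples of pairwise distinct indices, all distinct
from `j`, of the products of the corresponding entries of `X`; `C_j^1 = 1`. -/
def Cvec (n m : ℕ) (X : Fin n → ℝ) (j : Fin n) : ℝ :=
  ∑ g ∈ Finset.univ.filter (fun g : Fin (m - 1) ↪ Fin n => ∀ k, g k ≠ j),
    ∏ k, X (g k)

/-- The subgraph counting function with parameters `p`, `m₁,…,m_l`, `α₁,…,α_l`. -/
def scf (n l : ℕ) (p : ℝ) (m : Fin l → ℕ) (α : Fin l → ℝ) (X : Fin n → ℝ) : ℝ :=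
  (∑ q, (α q / (n : ℝ) ^ (m q - 1)) * ∑ g : Fin (m q) ↪ Fin n, ∏ k, X (g k)) +
    Real.log (p / (1 - p)) * ∑ i, |X i|

/-- The discrete derivative `∂ⱼf(X) = (f(X^{j←1}) - f(X^{j←0}))/2`. -/
def dder (n : ℕ) (f : (Fin n → ℝ) → ℝ) (X : Fin n → ℝ) (j : Fin n) : ℝ :=
  (f (Function.update X j 1) - f (Function.update X j 0)) / 2

/-- The polynomial extension of the discrete gradient of the subgraph counting function:
`∂ⱼf(X) = Σ_q (m_q α_q/(2 n^{m_q-1})) C_j^{m_q}(X) + ½ log(p/(1-p))`. -/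
def gradf (n l : ℕ) (p : ℝ) (m : Fin l → ℕ) (α : Fin l → ℝ) (X : Fin n → ℝ)
    (j : Fin n) : ℝ :=
  (∑ q, ((m q : ℝ) * α q / (2 * (n : ℝ) ^ (m q - 1))) * Cvec n (m q) X j) +
    Real.log (p / (1 - p)) / 2

/-- `C_α = max{2, ½|log(p/(1-p))| + ½ Σ_q |α_q| m_q (m_q - 1)}`. -/
def Calpha (l : ℕ) (p : ℝ) (m : Fin l → ℕ) (α : Fin l → ℝ) : ℝ :=
  max 2 (|Real.log (p / (1 - p))| / 2 + (∑ q, |α q| * (m q : ℝ) * ((m q : ℝ) - 1)) / 2)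

/-- `Φ(X) = (1ₙ + tanh(∇f(X)))/2`, entrywise. -/
def Phi (n l : ℕ) (p : ℝ) (m : Fin l → ℕ) (α : Fin l → ℝ) (X : Fin n → ℝ) :
    Fin n → ℝ :=
  fun j => (1 + Real.tanh (gradf n l p m α X j)) / 2

/-- The set `X_f` of near fixed points of `X ↦ (1ₙ + tanh(∇f(X)))/2` in `[0,1]ⁿ`. -/
def Xf (n l : ℕ) (p : ℝ) (m : Fin l → ℕ) (α : Fin l → ℝ) : Set (Fin n → ℝ) :=
  {X | (∀ i, X i ∈ Set.Icc (0:ℝ) 1) ∧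
    norm1 n (fun j => X j - Phi n l p m α X j) ≤
      5000 * (Calpha l p m α) ^ 2 * (n : ℝ) ^ ((7:ℝ)/8)}

/-- The one-dimensional fixed point function `φ_α`. -/
def phiA (n l : ℕ) (p : ℝ) (m : Fin l → ℕ) (α : Fin l → ℝ) (x : ℝ) : ℝ :=
  (1 + Real.tanh (Real.log (p / (1 - p)) / 2 +
    (∑ q, (m q : ℝ) * α q * (∏ i ∈ Finset.Icc 1 (m q - 1), (1 - (i : ℝ) / n)) *
      x ^ (m q - 1)) / 2)) / 2


namespace Stmt10Aux

lemma tanh_alt (x : ℝ) : Real.tanh x = 1 - 2 / (Real.exp (2*x) + 1) := by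
  rw [Real.tanh_eq_sinh_div_cosh, Real.sinh_eq, Real.cosh_eq]
  have h1 : Real.exp x + Real.exp (-x) > 0 := by positivity
  have h2 : Real.exp (2*x) + 1 > 0 := by positivity
  have h3 : Real.exp (2*x) = Real.exp x * Real.exp x := by
    rw [two_mul, Real.exp_add]
  have h4 : Real.exp x * Real.exp (-x) = 1 := by
    rw [← Real.exp_add]; simp
  field_simp
  rw [mul_comm x 2, h3]
  linear_combination (-2 * Real.exp x) * h4

lemma my_tanh_lt_one (x : ℝ) : Real.tanh x < 1 := by
  rw [tanh_alt]
  have : 0 < 2 / (Real.exp (2*x) + 1) := by positivity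
  linarith

lemma my_neg_one_lt_tanh (x : ℝ) : -1 < Real.tanh x := by
  rw [tanh_alt]
  have h : (0:ℝ) < Real.exp (2*x) := Real.exp_pos _
  have : 2 / (Real.exp (2*x) + 1) < 2 := by
    rw [div_lt_iff₀ (by positivity)]; nlinarith
  linarith

lemma tanh_monotone : Monotone Real.tanh := by
  intro a b hab
  rw [tanh_alt, tanh_alt]
  have h1 : Real.exp (2*a) ≤ Real.exp (2*b) := Real.exp_le_exp.2 (by linarith)
  have h2 : (0:ℝ) < Real.exp (2*a) + 1 := by positivity
  have : 2 / (Real.exp (2*b) + 1) ≤ 2 / (Real.exp (2*a) + 1) :=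
    div_le_div_of_nonneg_left (by norm_num) h2 (by linarith)
  linarith

lemma my_continuous_tanh : Continuous Real.tanh := by
  have h : Real.tanh = fun x => Real.sinh x / Real.cosh x :=
    funext fun x => Real.tanh_eq_sinh_div_cosh x
  rw [h]
  exact Real.continuous_sinh.div Real.continuous_cosh fun x => (Real.cosh_pos x).ne'

lemma card_filter_ne (n r : ℕ) (j : Fin n) :
    (Finset.univ.filter (fun g : Fin r ↪ Fin n => ∀ k, g k ≠ j)).card
      = (n-1).descFactorial r := by
  rw [← Fintype.card_subtype]
  have e : {g : Fin r ↪ Fin n // ∀ k, g k ≠ j} ≃ (Fin r ↪ {i : Fin n // i ≠ j}) :=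
    { toFun := fun g => ⟨fun k => ⟨g.1 k, g.2 k⟩,
        fun a b h => g.1.injective (congrArg Subtype.val h)⟩
      invFun := fun g => ⟨g.trans (Function.Embedding.subtype _), fun k => (g k).2⟩
      left_inv := fun g => by apply Subtype.ext; ext k; rfl
      right_inv := fun g => by ext k; rfl }
  rw [Fintype.card_congr e, Fintype.card_embedding_eq]
  congr 1
  · simp [Fintype.card_subtype_compl]
  · simp

lemma descFactorial_cast (n : ℕ) (hn : 0 < n) : ∀ r : ℕ,
    (((n-1).descFactorial r : ℕ) : ℝ) = ∏ i ∈ Finset.Icc 1 r, ((n:ℝ) - i) := by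
  intro r
  induction r with
  | zero => simp
  | succ r ih =>
    rw [Finset.prod_Icc_succ_top (Nat.le_add_left 1 r), ← ih, Nat.descFactorial_succ]
    by_cases h : r + 1 ≤ n
    · have h2 : ((n - 1 - r : ℕ) : ℝ) = (n:ℝ) - (r+1) := by
        have h1 : r ≤ n - 1 := by omega
        push_cast [Nat.cast_sub h1, Nat.cast_sub (by omega : 1 ≤ n)]
        ring
      push_cast [h2]
      ring
    · have h0 : (n-1).descFactorial r = 0 :=
        Nat.descFactorial_eq_zero_iff_lt.2 (by omega)
      simp [h0]

lemma Cvec_const (n M : ℕ) (a : ℝ) (j : Fin n) :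
    Cvec n M (fun _ => a) j = ((n-1).descFactorial (M-1) : ℕ) * a ^ (M-1) := by
  unfold Cvec
  rw [Finset.sum_congr rfl (fun g _ => by
      rw [Finset.prod_const, Finset.card_univ, Fintype.card_fin]),
    Finset.sum_const, card_filter_ne, nsmul_eq_mul]

lemma prod_one_sub (n r : ℕ) (hn : 0 < n) :
    ∏ i ∈ Finset.Icc 1 r, ((n:ℝ) - i)
      = (n:ℝ) ^ r * ∏ i ∈ Finset.Icc 1 r, (1 - (i:ℝ) / n) := by
  have hn' : (n:ℝ) ≠ 0 := Nat.cast_ne_zero.2 hn.ne'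
  have : (n:ℝ) ^ r = ∏ _i ∈ Finset.Icc 1 r, (n:ℝ) := by
    rw [Finset.prod_const, Nat.card_Icc]; norm_num
  rw [this, ← Finset.prod_mul_distrib]
  apply Finset.prod_congr rfl
  intro i _
  field_simp

lemma gradf_const (n l : ℕ) (hn : 0 < n) (p : ℝ) (m : Fin l → ℕ) (α : Fin l → ℝ)
    (a : ℝ) (j : Fin n) :
    gradf n l p m α (fun _ => a) j =
      Real.log (p / (1 - p)) / 2 +
      (∑ q, (m q : ℝ) * α q * (∏ i ∈ Finset.Icc 1 (m q - 1), (1 - (i : ℝ) / n)) *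
        a ^ (m q - 1)) / 2 := by
  unfold gradf
  rw [add_comm]
  congr 1
  rw [Finset.sum_div]
  apply Finset.sum_congr rfl
  intro q _
  rw [Cvec_const, descFactorial_cast n hn, prod_one_sub n _ hn]
  have hn' : (n:ℝ) ^ (m q - 1) ≠ 0 :=
    pow_ne_zero _ (Nat.cast_ne_zero.2 hn.ne')
  field_simp

lemma Phi_const (n l : ℕ) (hn : 0 < n) (p : ℝ) (m : Fin l → ℕ) (α : Fin l → ℝ)
    (a : ℝ) (j : Fin n) :
    Phi n l p m α (fun _ => a) j = phiA n l p m α a := by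
  unfold Phi phiA
  rw [gradf_const n l hn p m α a j]

lemma Cvec_mono (n M : ℕ) (X Y : Fin n → ℝ) (hY : ∀ i, 0 ≤ Y i)
    (h : ∀ i, Y i ≤ X i) (j : Fin n) :
    Cvec n M Y j ≤ Cvec n M X j :=
  Finset.sum_le_sum fun g _ =>
    Finset.prod_le_prod (fun k _ => hY _) (fun k _ => h _)

lemma gradf_mono (n l : ℕ) (p : ℝ) (m : Fin l → ℕ) (α : Fin l → ℝ)
    (hα : ∀ q, 0 ≤ α q) (X Y : Fin n → ℝ) (hY : ∀ i, 0 ≤ Y i)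
    (h : ∀ i, Y i ≤ X i) (j : Fin n) :
    gradf n l p m α Y j ≤ gradf n l p m α X j := by
  unfold gradf
  apply add_le_add_left
  apply Finset.sum_le_sum
  intro q _
  apply mul_le_mul_of_nonneg_left (Cvec_mono n _ X Y hY h j)
  apply div_nonneg (mul_nonneg (Nat.cast_nonneg _) (hα q))
  positivity

lemma Phi_mono (n l : ℕ) (p : ℝ) (m : Fin l → ℕ) (α : Fin l → ℝ)
    (hα : ∀ q, 0 ≤ α q) (X Y : Fin n → ℝ) (hY : ∀ i, 0 ≤ Y i)
    (h : ∀ i, Y i ≤ X i) (j : Fin n) :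
    Phi n l p m α Y j ≤ Phi n l p m α X j := by
  unfold Phi
  have := tanh_monotone (gradf_mono n l p m α hα X Y hY h j)
  linarith

lemma continuous_phiA (n l : ℕ) (p : ℝ) (m : Fin l → ℕ) (α : Fin l → ℝ) :
    Continuous (phiA n l p m α) := by
  unfold phiA
  apply Continuous.div_const
  apply Continuous.add continuous_const
  apply my_continuous_tanh.comp
  apply Continuous.add continuous_const
  apply Continuous.div_const
  apply continuous_finset_sum
  intro q _
  exact continuous_const.mul (continuous_pow _)

lemma phiA_mem (n l : ℕ) (p : ℝ) (m : Fin l → ℕ) (α : Fin l → ℝ) (t : ℝ) :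
    phiA n l p m α t ∈ Set.Ioo (0:ℝ) 1 := by
  unfold phiA
  constructor
  · have := my_neg_one_lt_tanh (Real.log (p / (1 - p)) / 2 +
      (∑ q, (m q : ℝ) * α q * (∏ i ∈ Finset.Icc 1 (m q - 1), (1 - (i : ℝ) / n)) *
        t ^ (m q - 1)) / 2)
    linarith
  · have := my_tanh_lt_one (Real.log (p / (1 - p)) / 2 +
      (∑ q, (m q : ℝ) * α q * (∏ i ∈ Finset.Icc 1 (m q - 1), (1 - (i : ℝ) / n)) *
        t ^ (m q - 1)) / 2)
    linarith

end Stmt10Aux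

open Stmt10Aux

/-- if `α_q ≥ 0` for all `q` and `x = φ_α(x)` has a unique solution
`x ∈ (0,1)`, then the constant vector `x·1ₙ` is the unique solution in `[0,1]ⁿ` of
`X = (1ₙ + tanh(∇f(X)))/2`. -/
theorem stmt10 (n l : ℕ) (hn : 0 < n) (p : ℝ) (hp : p ∈ Set.Ioo (0:ℝ) 1)
    (m : Fin l → ℕ) (hm : ∀ q, 2 ≤ m q) (hminj : Function.Injective m)
    (α : Fin l → ℝ) (hα : ∀ q, 0 ≤ α q)
    (x : ℝ) (hx : x ∈ Set.Ioo (0:ℝ) 1) (hfix : x = phiA n l p m α x)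
    (huniq : ∀ y ∈ Set.Icc (0:ℝ) 1, y = phiA n l p m α y → y = x) :
    ∀ X : Fin n → ℝ, (∀ i, X i ∈ Set.Icc (0:ℝ) 1) →
      (X = Phi n l p m α X ↔ X = fun _ => x) := by
  intro X hX
  set psi := phiA n l p m α with hpsi
  have hcont : Continuous fun t => psi t - t :=
    (continuous_phiA n l p m α).sub continuous_id
  constructor
  · intro hfp
    have hne : (Finset.univ : Finset (Fin n)).Nonempty := ⟨⟨0, hn⟩, Finset.mem_univ _⟩
    obtain ⟨j0, -, hj0⟩ := Finset.exists_min_image Finset.univ X hne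
    obtain ⟨j1, -, hj1⟩ := Finset.exists_max_image Finset.univ X hne
    set a := X j0 with ha
    set b := X j1 with hb
    have ha0 : 0 ≤ a := (hX j0).1
    have hb1 : b ≤ 1 := (hX j1).2
    have hab : a ≤ b := hj1 j0 (Finset.mem_univ _)
    have h1 : psi a ≤ a := by
      have hmono := Phi_mono n l p m α hα X (fun _ => a) (fun _ => ha0)
        (fun i => hj0 i (Finset.mem_univ _)) j0
      rw [Phi_const n l hn p m α a j0] at hmono
      calc psi a ≤ Phi n l p m α X j0 := hmono
        _ = a := (congrFun hfp j0).symm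
    have h2 : b ≤ psi b := by
      have hmono := Phi_mono n l p m α hα (fun _ => b) X
        (fun i => (hX i).1) (fun i => hj1 i (Finset.mem_univ _)) j1
      rw [Phi_const n l hn p m α b j1] at hmono
      calc b = Phi n l p m α X j1 := congrFun hfp j1
        _ ≤ psi b := hmono
    have hxa : x ≤ a := by
      have h0 : 0 ≤ psi 0 - 0 := by
        have := (phiA_mem n l p m α 0).1
        simp only [sub_zero]
        linarith
      have haa : psi a - a ≤ 0 := by linarith
      have hsub := intermediate_value_Icc' ha0 hcont.continuousOn
      have hmem : (0:ℝ) ∈ Set.Icc (psi a - a) (psi 0 - 0) := ⟨haa, h0⟩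
      obtain ⟨y, hy, hy0⟩ := hsub hmem
      have hyfix : y = psi y := by
        simp only at hy0
        linarith
      have hyx : y = x := huniq y ⟨hy.1, le_trans hy.2 (le_trans hab hb1)⟩ hyfix
      linarith [hy.2]
    have hbx : b ≤ x := by
      have h3 : psi 1 - 1 ≤ 0 := by
        have := (phiA_mem n l p m α 1).2
        linarith
      have hbb : 0 ≤ psi b - b := by linarith
      have hsub := intermediate_value_Icc' hb1 hcont.continuousOn
      have hmem : (0:ℝ) ∈ Set.Icc (psi 1 - 1) (psi b - b) := ⟨h3, hbb⟩
      obtain ⟨z, hz, hz0⟩ := hsub hmem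
      have hzfix : z = psi z := by
        simp only at hz0
        linarith
      have hzx : z = x := huniq z ⟨le_trans (le_trans ha0 hab) hz.1, hz.2⟩ hzfix
      linarith [hz.1]
    funext i
    have hlo := hj0 i (Finset.mem_univ _)
    have hhi := hj1 i (Finset.mem_univ _)
    show X i = x
    exact le_antisymm (by linarith) (by linarith)
  · intro h
    subst h
    funext j
    rw [Phi_const n l hn p m α x j]
    exact hfix


end
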